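/- arXiv:2110.15304 — 2 statements merged into one kernel-verified Lean document; each statement's English description precedes it below -/
import Mathlib

section
/- Let p ∈ (0,∞], β ∈ (0,1), and d ∈ ℕ. There exists a constant C = C(d,p,β) > 0 such that for every T ∈ (0,1] and every Lipschitz continuous function f : [0,1]^d → ℝ, one has Lip_β(f) ≤ C·(T^{−d/p − β}·‖f‖_{L^p([0,1]^d)} + T^{1−β}·Lip(f)), where d/p = 0 when p = ∞. -/
open MeasureTheory Filter
open scoped ENNReal NNReal Classical

noncomputable section

/-- The ReLU activation function. -/
def relu (x : ℝ) : ℝ := max 0 x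

/-- A (ReLU) neural network with input dimension `d` and output dimension `1` is encoded by
its number of layers `L ≥ 1`, its widths `N` (with `N 0 = d` and `N L = 1`),
its matrices `A ℓ` and bias vectors `b ℓ` (only the values for `ℓ < L` are relevant). -/
structure NeuralNet (d : ℕ) where
  L : ℕ
  hL : 0 < L
  N : ℕ → ℕ
  hN0 : N 0 = d
  hNL : N L = 1
  A : ∀ ℓ : ℕ, Matrix (Fin (N (ℓ + 1))) (Fin (N ℓ)) ℝ
  b : ∀ ℓ : ℕ, Fin (N (ℓ + 1)) → ℝ

namespace NeuralNet

variable {d : ℕ}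

/-- The vector of values computed in the `k`-th layer, with ReLU applied after
each affine map. -/
def hidden (Φ : NeuralNet d) : (k : ℕ) → (Fin d → ℝ) → Fin (Φ.N k) → ℝ
  | 0, x => x ∘ Fin.cast Φ.hN0
  | k + 1, x => fun i => relu ((Φ.A k).mulVec (Φ.hidden k x) i + Φ.b k i)

/-- The realization `R_ρ Φ` of the network: the last affine map is applied
without the ReLU activation. -/
def realization (Φ : NeuralNet d) (x : Fin d → ℝ) : ℝ :=
  ((Φ.A (Φ.L - 1)).mulVec (Φ.hidden (Φ.L - 1) x) + Φ.b (Φ.L - 1))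
    (Fin.cast (show (1 : ℕ) = Φ.N (Φ.L - 1 + 1) by
      rw [Nat.sub_add_cancel Φ.hL, Φ.hNL]) 0)

/-- `W(Φ)`: the number of nonzero weights (entries of the matrices and bias vectors). -/
def weightCount (Φ : NeuralNet d) : ℕ :=
  ∑ ℓ ∈ Finset.range Φ.L,
    ((Finset.univ.filter fun ij : Fin (Φ.N (ℓ + 1)) × Fin (Φ.N ℓ) => Φ.A ℓ ij.1 ij.2 ≠ 0).card
      + (Finset.univ.filter fun i : Fin (Φ.N (ℓ + 1)) => Φ.b ℓ i ≠ 0).card)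

/-- `‖Φ‖_NN ≤ C`: all entries of all matrices and bias vectors are bounded by `C` in
absolute value. -/
def weightsBoundedBy (Φ : NeuralNet d) (C : ℝ≥0∞) : Prop :=
  ∀ ℓ < Φ.L, (∀ i j, ENNReal.ofReal |Φ.A ℓ i j| ≤ C) ∧ (∀ i, ENNReal.ofReal |Φ.b ℓ i| ≤ C)

end NeuralNet

/-- `Σ_n`: the set of realizations of networks with input dimension `d`, output dimension 1,
at most `n` nonzero weights, at most `ℓf n` layers, and weights bounded by `cf n`. -/
def NNSet (d : ℕ) (ℓf : ℕ → ℕ∞) (cf : ℕ → ℝ≥0∞) (n : ℕ) : Set ((Fin d → ℝ) → ℝ) :=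
  { F | ∃ Φ : NeuralNet d, F = Φ.realization ∧ Φ.weightCount ≤ n ∧
      (Φ.L : ℕ∞) ≤ ℓf n ∧ Φ.weightsBoundedBy (cf n) }

/-- The unit cube `[0,1]^d`. -/
def unitCube (d : ℕ) : Set (Fin d → ℝ) := Set.Icc 0 1

/-- `d_p(f, S)`: the `L^p(Ω)` distance of `f` to the set `S`. -/
def dLp (d : ℕ) (Ω : Set (Fin d → ℝ)) (p : ℝ≥0∞) (f : (Fin d → ℝ) → ℝ)
    (S : Set ((Fin d → ℝ) → ℝ)) : ℝ≥0∞ :=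
  ⨅ g ∈ S, eLpNorm (f - g) p (volume.restrict Ω)

/-- `Γ(f) = max (‖f‖_{L^p(Ω)}) (sup_{n ≥ 1} n^α d_p(f, Σ_n))`. -/
def Gamma (d : ℕ) (ℓf : ℕ → ℕ∞) (cf : ℕ → ℝ≥0∞) (Ω : Set (Fin d → ℝ)) (p : ℝ≥0∞) (α : ℝ)
    (f : (Fin d → ℝ) → ℝ) : ℝ≥0∞ :=
  max (eLpNorm f p (volume.restrict Ω))
    (⨆ n : ℕ, ((n + 1 : ℕ) : ℝ≥0∞) ^ α * dLp d Ω p f (NNSet d ℓf cf (n + 1)))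

/-- The approximation space quasi-norm `‖f‖_{A^α_{ℓ,c,p}(Ω)} = inf {θ > 0 : Γ(f/θ) ≤ 1}`,
with value `∞` (`sInf ∅`) if no such `θ` exists. -/
def ANorm (d : ℕ) (ℓf : ℕ → ℕ∞) (cf : ℕ → ℝ≥0∞) (Ω : Set (Fin d → ℝ)) (p : ℝ≥0∞) (α : ℝ)
    (f : (Fin d → ℝ) → ℝ) : ℝ≥0∞ :=
  sInf {t : ℝ≥0∞ | ∃ θ : ℝ, 0 < θ ∧ t = ENNReal.ofReal θ ∧
    Gamma d ℓf cf Ω p α (fun x => f x / θ) ≤ 1}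

/-- Membership in the approximation space `A^α_{ℓ,c,p}(Ω)`:
`f ∈ L^p(Ω)` and `‖f‖_{A^α_{ℓ,c,p}} < ∞`. -/
def MemA (d : ℕ) (ℓf : ℕ → ℕ∞) (cf : ℕ → ℝ≥0∞) (Ω : Set (Fin d → ℝ)) (p : ℝ≥0∞) (α : ℝ)
    (f : (Fin d → ℝ) → ℝ) : Prop :=
  MemLp f p (volume.restrict Ω) ∧ ANorm d ℓf cf Ω p α f < ⊤

/-- `ℓ* = sup_n ℓ(n)`. -/
def lstar (ℓf : ℕ → ℕ∞) : ℕ∞ := ⨆ n : ℕ, ℓf n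

/-- `γ*(ℓ,c)`. -/
def gammaStar (ℓf : ℕ → ℕ∞) (cf : ℕ → ℝ≥0∞) : ℝ≥0∞ :=
  sSup {t : ℝ≥0∞ | ∃ γ : ℝ, 0 ≤ γ ∧ t = ENNReal.ofReal γ ∧
    ∃ L : ℕ, 1 ≤ L ∧ (L : ℕ∞) ≤ lstar ℓf ∧
      0 < Filter.limsup
        (fun n : ℕ => cf n ^ L * (n : ℝ≥0∞) ^ (L / 2) / (n : ℝ≥0∞) ^ (γ : ℝ))
        Filter.atTop}

/-- `γ◇(ℓ,c)`. -/
def gammaDiamond (ℓf : ℕ → ℕ∞) (cf : ℕ → ℝ≥0∞) : ℝ≥0∞ :=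
  sInf {t : ℝ≥0∞ | ∃ γ : ℝ, 0 ≤ γ ∧ t = ENNReal.ofReal γ ∧
    ∃ C : ℝ, 0 < C ∧ ∀ n : ℕ, 1 ≤ n → ∀ L : ℕ, 1 ≤ L → (L : ℕ∞) ≤ lstar ℓf →
      cf n ^ L * (n : ℝ≥0∞) ^ (L / 2) ≤ ENNReal.ofReal C * (n : ℝ≥0∞) ^ (γ : ℝ)}

/-- The Hölder seminorm `Lip_β(f)` on the unit cube, with respect to the `ℓ∞` metric
(which is the metric of `Fin d → ℝ`), valued in `[0,∞]`. -/
def eLip (d : ℕ) (β : ℝ) (f : (Fin d → ℝ) → ℝ) : ℝ≥0∞ :=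
  ⨆ x ∈ unitCube d, ⨆ y ∈ unitCube d, ⨆ _ : x ≠ y,
    ENNReal.ofReal (|f x - f y| / dist x y ^ β)

/-- The supremum norm over the unit cube, valued in `[0,∞]`. -/
def supNormCube (d : ℕ) (f : (Fin d → ℝ) → ℝ) : ℝ≥0∞ :=
  ⨆ x ∈ unitCube d, ENNReal.ofReal |f x|

/-- The Hölder norm `‖f‖_{C^{0,β}} = ‖f‖_{L∞} + Lip_β(f)`, valued in `[0,∞]`. -/
def holderNorm (d : ℕ) (β : ℝ) (f : (Fin d → ℝ) → ℝ) : ℝ≥0∞ :=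
  supNormCube d f + eLip d β f

/-- `d/p`, interpreted as `0` when `p = ∞`. -/
def dOverP (d : ℕ) (p : ℝ≥0∞) : ℝ := if p = ⊤ then 0 else (d : ℝ) / p.toReal

/-- The function `ζ_{M'}(x) = max {0, 1 - M' * ∑ i, x i}`. -/
def zeta (d : ℕ) (M' : ℝ) (x : Fin d → ℝ) : ℝ := max 0 (1 - M' * ∑ i, x i)

/-- Piecewise constant interpolation of `f` on the tensor grid `{0, 1/n, …, n/n}^d`,
constant on the cells `(i_1/n, …, i_d/n) + [0, 1/n)^d`. -/
def pwConstGrid (d n : ℕ) (f : (Fin d → ℝ) → ℝ) (x : Fin d → ℝ) : ℝ :=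
  ∑ i : Fin d → Fin (n + 1),
    if ∀ j, ((i j : ℝ) / n ≤ x j ∧ x j < (i j : ℝ) / n + 1 / n) then
      f (fun j => (i j : ℝ) / n) else 0

/-- The piecewise constant interpolation operator `A_m^{pw-const}`,
using the grid with `n = ⌊m^{1/d}⌋ - 1`. -/
def pwConst (d m : ℕ) (f : (Fin d → ℝ) → ℝ) : (Fin d → ℝ) → ℝ :=
  pwConstGrid d (Nat.floor ((m : ℝ) ^ ((d : ℝ)⁻¹)) - 1) f

end
/-- Lemma 3.4 / `lem:HoelderConstantBound`: there is `C = C(d,p,β) > 0`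
such that for all `T ∈ (0,1]` and all Lipschitz `f : [0,1]^d → ℝ`,
`Lip_β(f) ≤ C·(T^{−d/p−β}·‖f‖_{L^p} + T^{1−β}·Lip(f))`, with `d/p = 0` when `p = ∞`. -/
theorem holder_le_Lp_add_lipschitz
    (d : ℕ) (hd : 0 < d) (p : ℝ≥0∞) (hp : 0 < p) (β : ℝ) (hβ0 : 0 < β) (hβ1 : β < 1) :
    ∃ C : ℝ, 0 < C ∧
      ∀ T : ℝ, 0 < T → T ≤ 1 →
        ∀ f : (Fin d → ℝ) → ℝ, eLip d 1 f < ⊤ →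
          eLip d β f ≤ ENNReal.ofReal C *
            (ENNReal.ofReal (T ^ (-(dOverP d p) - β))
                * eLpNorm f p (volume.restrict (unitCube d))
              + ENNReal.ofReal (T ^ (1 - β)) * eLip d 1 f) := by
  refine ⟨4, by norm_num, ?_⟩
  intro T hT0 hT1 f hf
  set μ' := volume.restrict (unitCube d) with hμ'
  set N := eLpNorm f p μ' with hN
  set Λ := eLip d 1 f with hΛ
  set L := Λ.toReal with hLdef
  have hL0 : 0 ≤ L := ENNReal.toReal_nonneg
  -- extract terms of the sup defining eLip 1
  have hterm : ∀ x ∈ unitCube d, ∀ y ∈ unitCube d, x ≠ y →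
      ENNReal.ofReal (|f x - f y| / dist x y) ≤ Λ := by
    intro x hx y hy hne
    rw [hΛ]
    unfold eLip
    refine le_iSup₂_of_le x hx ?_
    refine le_iSup₂_of_le y hy ?_
    refine le_iSup_of_le hne ?_
    rw [Real.rpow_one]
  have hlip : ∀ x ∈ unitCube d, ∀ y ∈ unitCube d, |f x - f y| ≤ L * dist x y := by
    intro x hx y hy
    rcases eq_or_ne x y with rfl | hne
    · simp
    · have hD0 : 0 < dist x y := dist_pos.mpr hne
      have h1 := hterm x hx y hy hne
      have h2 : |f x - f y| / dist x y ≤ L := by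
        have := ENNReal.toReal_mono hf.ne h1
        rwa [ENNReal.toReal_ofReal (by positivity)] at this
      calc |f x - f y| = |f x - f y| / dist x y * dist x y := by field_simp
        _ ≤ L * dist x y := by nlinarith
  have hcont : ContinuousOn f (unitCube d) := by
    refine (LipschitzOnWith.of_dist_le' (K := L) ?_).continuousOn
    intro x hx y hy
    rw [Real.dist_eq]
    exact hlip x hx y hy
  have h0mem : (0 : Fin d → ℝ) ∈ unitCube d := by
    constructor <;> intro j <;> norm_num
  obtain ⟨x₀, hx₀c, hmax⟩ :=
    (isCompact_Icc (α := Fin d → ℝ)).exists_isMaxOn ⟨0, h0mem⟩ hcont.abs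
  set M := |f x₀| with hM
  have hM0 : 0 ≤ M := abs_nonneg _
  have hx₀0 : ∀ j, 0 ≤ x₀ j := fun j => by simpa using hx₀c.1 j
  have hx₀1 : ∀ j, x₀ j ≤ 1 := fun j => by simpa using hx₀c.2 j
  have hmax' : ∀ z ∈ unitCube d, |f z| ≤ M := fun z hz => hmax hz
  -- the key bound on M
  have hMkey : M ≤ 2 * L * T ∨
      ENNReal.ofReal M ≤ 2 * ENNReal.ofReal (T ^ (-(dOverP d p))) * N := by
    by_cases hcase : M ≤ 2 * L * T
    · exact Or.inl hcase
    right
    push_neg at hcase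
    have hLT : L * T < M / 2 := by linarith
    set a : Fin d → ℝ := fun j => min (x₀ j) (1 - T) with ha
    set Q : Set (Fin d → ℝ) := Set.Icc a (fun j => a j + T) with hQ
    have hax₀ : a ≤ x₀ := fun j => min_le_left _ _
    have hx₀Q : x₀ ∈ Q := by
      refine ⟨hax₀, fun j => ?_⟩
      have h1 : x₀ j - T ≤ a j := le_min (by linarith) (by have := hx₀1 j; linarith)
      simpa using sub_le_iff_le_add.mp h1
    have hQsub : Q ⊆ unitCube d := by
      intro z hz
      refine ⟨fun j => ?_, fun j => ?_⟩
      · have h0a : 0 ≤ a j := le_min (hx₀0 j) (by linarith)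
        exact le_trans h0a (hz.1 j)
      · have := hz.2 j
        have : z j ≤ a j + T := this
        have h2 : a j ≤ 1 - T := min_le_right _ _
        simpa using by linarith
    have hQdist : ∀ z ∈ Q, dist z x₀ ≤ T := by
      intro z hz
      rw [dist_pi_le_iff hT0.le]
      intro j
      rw [Real.dist_eq, abs_sub_le_iff]
      have h1 := hz.1 j; have h2 := hz.2 j
      have h3 := hax₀ j
      have h4 := hx₀Q.2 j
      constructor <;> simp only at h2 h4 <;> linarith
    have hlow : ∀ z ∈ Q, M / 2 ≤ |f z| := by
      intro z hz
      have h1 : |f x₀ - f z| ≤ L * dist x₀ z :=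
        hlip x₀ hx₀c z (hQsub hz)
      have h2 : dist x₀ z ≤ T := by rw [dist_comm]; exact hQdist z hz
      have h3 : M - |f z| ≤ |f x₀ - f z| := abs_sub_abs_le_abs_sub _ _
      have h4 : L * dist x₀ z ≤ L * T := by nlinarith [dist_nonneg (x := x₀) (y := z)]
      linarith
    set g : (Fin d → ℝ) → ℝ := Q.indicator (fun _ => M / 2) with hg
    have hgle : eLpNorm g p μ' ≤ N := by
      refine eLpNorm_mono fun z => ?_
      by_cases hz : z ∈ Q
      · rw [hg, Set.indicator_of_mem hz, Real.norm_eq_abs, Real.norm_eq_abs,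
          abs_of_nonneg (by linarith)]
        exact hlow z hz
      · rw [hg, Set.indicator_of_notMem hz, norm_zero]
        exact norm_nonneg _
    have hQmeas : MeasurableSet Q := measurableSet_Icc
    have hQvol : μ' Q = ENNReal.ofReal T ^ d := by
      rw [hμ', Measure.restrict_apply hQmeas, Set.inter_eq_left.mpr hQsub, hQ,
        Real.volume_Icc_pi]
      simp
    have hQμ0 : μ' Q ≠ 0 := by
      rw [hQvol]
      exact pow_ne_zero _ (ENNReal.ofReal_pos.mpr hT0).ne'
    have hgeq : eLpNorm g p μ' = ENNReal.ofReal (M / 2) * μ' Q ^ (1 / p.toReal) := by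
      rw [hg, eLpNorm_indicator_const' hQmeas hQμ0 hp.ne',
        Real.enorm_eq_ofReal (by linarith)]
    have hdp : (d : ℝ) * (1 / p.toReal) = dOverP d p := by
      unfold dOverP
      split_ifs with h
      · simp [h]
      · rw [mul_one_div]
    have hQpow : (μ' Q : ℝ≥0∞) ^ (1 / p.toReal) = ENNReal.ofReal (T ^ dOverP d p) := by
      rw [hQvol, ← ENNReal.ofReal_pow hT0.le,
        ENNReal.ofReal_rpow_of_pos (pow_pos hT0 d)]
      congr 1
      rw [← Real.rpow_natCast T d, ← Real.rpow_mul hT0.le, hdp]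
    have hkey1 : ENNReal.ofReal (M / 2) * ENNReal.ofReal (T ^ dOverP d p) ≤ N := by
      rw [← hQpow, ← hgeq]; exact hgle
    have hcancel : ENNReal.ofReal (T ^ dOverP d p) *
        ENNReal.ofReal (T ^ (-(dOverP d p))) = 1 := by
      rw [← ENNReal.ofReal_mul (Real.rpow_nonneg hT0.le _), ← Real.rpow_add hT0]
      simp
    calc ENNReal.ofReal M = ENNReal.ofReal 2 * ENNReal.ofReal (M / 2) := by
          rw [← ENNReal.ofReal_mul (by norm_num)]
          congr 1
          ring
      _ = ENNReal.ofReal 2 * (ENNReal.ofReal (M / 2) *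
            (ENNReal.ofReal (T ^ dOverP d p) * ENNReal.ofReal (T ^ (-(dOverP d p))))) := by
          rw [hcancel, mul_one]
      _ = ENNReal.ofReal 2 * ENNReal.ofReal (T ^ (-(dOverP d p))) *
            (ENNReal.ofReal (M / 2) * ENNReal.ofReal (T ^ dOverP d p)) := by ring
      _ ≤ ENNReal.ofReal 2 * ENNReal.ofReal (T ^ (-(dOverP d p))) * N :=
          mul_le_mul_right hkey1 _
      _ = 2 * ENNReal.ofReal (T ^ (-(dOverP d p))) * N := by norm_num
  -- now the per-term bound
  set S1 := ENNReal.ofReal (T ^ (-(dOverP d p) - β)) * N with hS1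
  set S2 := ENNReal.ofReal (T ^ (1 - β)) * Λ with hS2
  have h4 : ENNReal.ofReal (4 : ℝ) = (4 : ℝ≥0∞) := by norm_num
  unfold eLip
  refine iSup₂_le fun x hx => iSup₂_le fun y hy => iSup_le fun hne => ?_
  rw [h4]
  set D := dist x y with hD
  have hD0 : 0 < D := dist_pos.mpr hne
  have hD1 : D ≤ 1 := by
    rw [hD, dist_pi_le_iff zero_le_one]
    intro j
    rw [Real.dist_eq, abs_sub_le_iff]
    have h1 : 0 ≤ x j := by simpa using hx.1 j
    have h2 : x j ≤ 1 := by simpa using hx.2 j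
    have h3 : 0 ≤ y j := by simpa using hy.1 j
    have h4 : y j ≤ 1 := by simpa using hy.2 j
    constructor <;> linarith
  rcases le_or_gt D T with hDT | hTD
  · -- small distance: use Lipschitz term
    have e1 : |f x - f y| / D ^ β = |f x - f y| / D * D ^ (1 - β) := by
      rw [Real.rpow_sub hD0, Real.rpow_one]
      have hDβ : (0:ℝ) < D ^ β := Real.rpow_pos_of_pos hD0 β
      field_simp
    rw [e1, ENNReal.ofReal_mul (by positivity)]
    have b1 : ENNReal.ofReal (|f x - f y| / D) ≤ Λ := hterm x hx y hy hne
    have b2 : ENNReal.ofReal (D ^ (1 - β)) ≤ ENNReal.ofReal (T ^ (1 - β)) :=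
      ENNReal.ofReal_le_ofReal (Real.rpow_le_rpow hD0.le hDT (by linarith))
    calc ENNReal.ofReal (|f x - f y| / D) * ENNReal.ofReal (D ^ (1 - β))
        ≤ Λ * ENNReal.ofReal (T ^ (1 - β)) := mul_le_mul' b1 b2
      _ = S2 := by rw [hS2, mul_comm]
      _ ≤ 4 * (S1 + S2) := by
          calc S2 ≤ S1 + S2 := le_add_self
            _ ≤ 4 * (S1 + S2) := le_mul_of_one_le_left (zero_le (a := S1 + S2)) (by norm_num)
  · -- large distance
    have hΔ : |f x - f y| ≤ 2 * M := by
      have h1 := hmax' x hx; have h2 := hmax' y hy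
      calc |f x - f y| ≤ |f x| + |f y| := abs_sub _ _
        _ ≤ 2 * M := by linarith
    have hTβ : (0:ℝ) < T ^ β := Real.rpow_pos_of_pos hT0 β
    have hDβ : T ^ β ≤ D ^ β := Real.rpow_le_rpow hT0.le hTD.le hβ0.le
    have hratio : |f x - f y| / D ^ β ≤ 2 * M / T ^ β :=
      div_le_div₀ (by linarith) hΔ hTβ hDβ
    rcases hMkey with hMk | hMk
    · -- M ≤ 2LT
      have hTT : T / T ^ β = T ^ (1 - β) := by
        rw [Real.rpow_sub hT0, Real.rpow_one]
      have hr2 : 2 * M / T ^ β ≤ 4 * (T ^ (1 - β) * L) := by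
        calc 2 * M / T ^ β ≤ 2 * (2 * L * T) / T ^ β := by gcongr
          _ = 4 * L * (T / T ^ β) := by ring
          _ = 4 * (T ^ (1 - β) * L) := by rw [hTT]; ring
      calc ENNReal.ofReal (|f x - f y| / D ^ β)
          ≤ ENNReal.ofReal (4 * (T ^ (1 - β) * L)) :=
            ENNReal.ofReal_le_ofReal (le_trans hratio hr2)
        _ = ENNReal.ofReal 4 * (ENNReal.ofReal (T ^ (1 - β)) * ENNReal.ofReal L) := by
            rw [ENNReal.ofReal_mul (by norm_num), ENNReal.ofReal_mul (by positivity)]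
        _ ≤ 4 * (ENNReal.ofReal (T ^ (1 - β)) * Λ) := by
            rw [h4]; exact mul_le_mul_right (mul_le_mul_right ENNReal.ofReal_toReal_le _) _
        _ = 4 * S2 := by rw [hS2]
        _ ≤ 4 * (S1 + S2) := mul_le_mul_right le_add_self _
    · -- M controlled by Lp norm
      have e2 : 2 * M / T ^ β = 2 * T ^ (-β) * M := by
        rw [Real.rpow_neg hT0.le]
        field_simp
      have hcomb : ENNReal.ofReal (T ^ (-β)) * ENNReal.ofReal (T ^ (-(dOverP d p)))
          = ENNReal.ofReal (T ^ (-(dOverP d p) - β)) := by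
        rw [← ENNReal.ofReal_mul (Real.rpow_nonneg hT0.le _), ← Real.rpow_add hT0]
        ring_nf
      calc ENNReal.ofReal (|f x - f y| / D ^ β)
          ≤ ENNReal.ofReal (2 * T ^ (-β) * M) := by
            rw [← e2]; exact ENNReal.ofReal_le_ofReal hratio
        _ = ENNReal.ofReal (2 * T ^ (-β)) * ENNReal.ofReal M := by
            rw [ENNReal.ofReal_mul (by positivity)]
        _ ≤ ENNReal.ofReal (2 * T ^ (-β)) *
              (2 * ENNReal.ofReal (T ^ (-(dOverP d p))) * N) := mul_le_mul_right hMk _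
        _ = 2 * ENNReal.ofReal (T ^ (-β)) *
              (2 * ENNReal.ofReal (T ^ (-(dOverP d p))) * N) := by
            rw [ENNReal.ofReal_mul (by norm_num)]
            norm_num
        _ = 4 * (ENNReal.ofReal (T ^ (-β)) * ENNReal.ofReal (T ^ (-(dOverP d p))) * N) := by
            ring
        _ = 4 * S1 := by rw [hcomb, hS1]
        _ ≤ 4 * (S1 + S2) := mul_le_mul_right le_self_add _
end

section
/- Let d ∈ ℕ and let ℓ : ℕ → ℕ_{≥2} ∪ {∞} and c : ℕ → ℕ ∪ {∞} be non-decreasing. Let n ∈ ℕ, let C be a real number with 0 ≤ C ≤ c(n), let L ∈ ℕ with L ≥ 2 and L ≤ ℓ(n), let M' ≥ 1, and let M be a real number with 0 ≤ M ≤ C^L·n^{⌊L/2⌋}. Then the function (M/M')·ζ_{M'}, where ζ_{M'}(x) = max{0, 1 − M'·Σ_{i=1}^d x_i}, belongs to Σ_{(d+L)·n}; that is, it equals the realization of a ReLU network Φ with input dimension d, output dimension 1, W(Φ) ≤ (d+L)·n, L(Φ) ≤ ℓ((d+L)·n), and ‖Φ‖_NN ≤ c((d+L)·n). -/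
open MeasureTheory Filter
open scoped ENNReal NNReal Classical

noncomputable section AuxZeta

/-- The scaled hinge `max 0 (1/M' - ∑ x i)`. -/
def zval (d : ℕ) (M' : ℝ) (x : Fin d → ℝ) : ℝ := max 0 (1 / M' - ∑ i, x i)

lemma zval_nonneg (d : ℕ) (M' : ℝ) (x : Fin d → ℝ) : 0 ≤ zval d M' x :=
  le_max_left _ _

lemma relu_of_nonneg {t : ℝ} (h : 0 ≤ t) : relu t = t := max_eq_right h

lemma relu_mul {a t : ℝ} (ha : 0 ≤ a) : relu (a * t) = a * relu t := by
  unfold relu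
  rcases le_total t 0 with h | h
  · rw [max_eq_left (by nlinarith), max_eq_left h, mul_zero]
  · rw [max_eq_right (by nlinarith), max_eq_right h]

/-- The network realizing `a^L * n^(L/2) * zval d M' ·`. -/
def zetaNet (d n L : ℕ) (hL : 0 < L) (a M' : ℝ) : NeuralNet d where
  L := L
  hL := hL
  N := fun k => if k = 0 then d else if k < L then n else 1
  hN0 := by simp
  hNL := by
    have h0 : ¬ L = 0 := by omega
    simp [h0]
  A := fun ℓ i j =>
    if ℓ = 0 then -a
    else if ℓ % 2 = 1 then (if (i : ℕ) = 0 then a else 0)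
    else (if (j : ℕ) = 0 then a else 0)
  b := fun ℓ _ => if ℓ = 0 then a / M' else 0

lemma zetaNet_hidden (d n L : ℕ) (hn : 0 < n) (hL : 2 ≤ L)
    (a M' : ℝ) (ha : 0 ≤ a) (x : Fin d → ℝ) :
    ∀ k, 1 ≤ k → k < L →
      ∀ i : Fin ((zetaNet d n L (by omega) a M').N k),
        (zetaNet d n L (by omega) a M').hidden k x i =
          if k % 2 = 1 then a ^ k * (n : ℝ) ^ (k / 2) * zval d M' x
          else if (i : ℕ) = 0 then a ^ k * (n : ℝ) ^ (k / 2) * zval d M' x else 0 := by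
  set Φ := zetaNet d n L (by omega : 0 < L) a M' with hΦ
  have hz : 0 ≤ zval d M' x := zval_nonneg d M' x
  intro k hk
  induction k, hk using Nat.le_induction with
  | base =>
    intro _ i
    have h1 : Φ.hidden 1 x i = relu ((Φ.A 0).mulVec (Φ.hidden 0 x) i + Φ.b 0 i) := rfl
    have hA : ∀ j, Φ.A 0 i j = -a := fun j => rfl
    have hb : Φ.b 0 i = a / M' := rfl
    have hsum : (Φ.A 0).mulVec (Φ.hidden 0 x) i = -a * ∑ i, x i := by
      simp only [Matrix.mulVec, dotProduct, hA]
      rw [← Finset.mul_sum]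
      all_goals congr 1
      all_goals exact Fintype.sum_equiv (finCongr Φ.hN0) _ _ (fun j => rfl)
    rw [h1, hsum, hb]
    have : -a * ∑ i, x i + a / M' = a * (1 / M' - ∑ i, x i) := by ring
    rw [this, relu_mul ha]
    simp only [zval, relu]
    norm_num
  | succ k hk ih =>
    intro hkL i
    have hkL' : k < L := by omega
    have hk0 : ¬ k = 0 := by omega
    have hklt : k < L := by omega
    have hNk : Φ.N k = n := by
      show (if k = 0 then d else if k < L then n else 1) = n
      rw [if_neg hk0, if_pos hklt]
    have hih := ih hkL'
    have hhid : Φ.hidden (k + 1) x i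
        = relu ((Φ.A k).mulVec (Φ.hidden k x) i + Φ.b k i) := rfl
    have hb : Φ.b k i = 0 := by
      show (if k = 0 then a / M' else 0) = 0
      rw [if_neg hk0]
    rcases Nat.even_or_odd k with hke | hko
    · -- k even, so k % 2 = 0, hidden k is supported at index 0; layer k broadcasts
      have hk2 : k % 2 = 0 := Nat.even_iff.mp hke
      have hk2' : ¬ k % 2 = 1 := by omega
      have hA : ∀ j : Fin (Φ.N k), Φ.A k i j = if (j : ℕ) = 0 then a else 0 := by
        intro j
        show (if k = 0 then -a else if k % 2 = 1 then (if ((i : Fin (Φ.N (k+1))) : ℕ) = 0 then a else 0)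
          else (if ((j : Fin (Φ.N k)) : ℕ) = 0 then a else 0)) = _
        rw [if_neg hk0, if_neg hk2']
      have hsum : (Φ.A k).mulVec (Φ.hidden k x) i
          = a * (a ^ k * (n : ℝ) ^ (k / 2) * zval d M' x) := by
        simp only [Matrix.mulVec, dotProduct, hA]
        have hfun : ∀ j : Fin (Φ.N k),
            (if (j : ℕ) = 0 then a else 0) * Φ.hidden k x j
            = if j = (⟨0, by omega⟩ : Fin (Φ.N k)) then
                a * (a ^ k * (n : ℝ) ^ (k / 2) * zval d M' x) else 0 := by
          intro j
          rw [hih j]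
          by_cases hj : (j : ℕ) = 0
          · have : j = (⟨0, by omega⟩ : Fin (Φ.N k)) := by
              apply Fin.ext; simpa using hj
            simp [hj, this, hk2']
          · have : ¬ j = (⟨0, by omega⟩ : Fin (Φ.N k)) := by
              intro hjj; apply hj; rw [hjj]
            simp [hj, this]
        rw [Finset.sum_congr rfl (fun j _ => hfun j), Finset.sum_ite_eq']
        simp
      rw [hhid, hsum, hb, add_zero,
        relu_of_nonneg (by positivity)]
      have hmod : (k + 1) % 2 = 1 := by omega
      have hdiv : (k + 1) / 2 = k / 2 := by omega
      rw [if_pos hmod, hdiv]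
      ring
    · -- k odd: hidden k is constant; layer k collapses (sums)
      have hk2 : k % 2 = 1 := Nat.odd_iff.mp hko
      have hA : ∀ j : Fin (Φ.N k), Φ.A k i j = if (i : ℕ) = 0 then a else 0 := by
        intro j
        show (if k = 0 then -a else if k % 2 = 1 then (if ((i : Fin (Φ.N (k+1))) : ℕ) = 0 then a else 0)
          else (if ((j : Fin (Φ.N k)) : ℕ) = 0 then a else 0)) = _
        rw [if_neg hk0, if_pos hk2]
      have hsum : (Φ.A k).mulVec (Φ.hidden k x) i
          = (if (i : ℕ) = 0 then a else 0)
              * ((n : ℝ) * (a ^ k * (n : ℝ) ^ (k / 2) * zval d M' x)) := by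
        simp only [Matrix.mulVec, dotProduct, hA]
        have hfun : ∀ j : Fin (Φ.N k),
            (if (i : ℕ) = 0 then a else 0) * Φ.hidden k x j
            = (if (i : ℕ) = 0 then a else 0)
                * (a ^ k * (n : ℝ) ^ (k / 2) * zval d M' x) := by
          intro j
          rw [hih j, if_pos hk2]
        rw [Finset.sum_congr rfl (fun j _ => hfun j), Finset.sum_const,
          Finset.card_univ, Fintype.card_fin, hNk, nsmul_eq_mul]
        ring
      rw [hhid, hsum, hb, add_zero]
      have hmod : ¬ (k + 1) % 2 = 1 := by omega
      have hdiv : (k + 1) / 2 = k / 2 + 1 := by omega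
      rw [if_neg hmod, hdiv]
      by_cases hi : (i : ℕ) = 0
      · rw [if_pos hi, if_pos hi, relu_of_nonneg (by positivity)]
        rw [pow_succ, pow_succ]
        ring
      · rw [if_neg hi, if_neg hi, zero_mul]
        simp [relu]

lemma zetaNet_realization (d n L : ℕ) (hn : 0 < n) (hL : 2 ≤ L)
    (a M' : ℝ) (ha : 0 ≤ a) (x : Fin d → ℝ) :
    (zetaNet d n L (by omega) a M').realization x
      = a ^ L * (n : ℝ) ^ (L / 2) * zval d M' x := by
  set Φ := zetaNet d n L (by omega : 0 < L) a M' with hΦ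
  have hz : 0 ≤ zval d M' x := zval_nonneg d M' x
  have hΦL : Φ.L = L := rfl
  set m := L - 1 with hm
  have hm1 : 1 ≤ m := by omega
  have hmL : m < L := by omega
  have hm0 : ¬ m = 0 := by omega
  have hNm : Φ.N m = n := by
    show (if m = 0 then d else if m < L then n else 1) = n
    rw [if_neg hm0, if_pos hmL]
  have hih := zetaNet_hidden d n L hn hL a M' ha x m hm1 hmL
  have hreal : Φ.realization x
      = ((Φ.A m).mulVec (Φ.hidden m x) + Φ.b m)
          (Fin.cast (show (1 : ℕ) = Φ.N (Φ.L - 1 + 1) by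
            rw [Nat.sub_add_cancel Φ.hL, Φ.hNL]) 0) := rfl
  set idx := (Fin.cast (show (1 : ℕ) = Φ.N (Φ.L - 1 + 1) by
            rw [Nat.sub_add_cancel Φ.hL, Φ.hNL]) 0) with hidx
  have hidxv : (idx : ℕ) = 0 := rfl
  have hb : Φ.b m idx = 0 := by
    show (if m = 0 then a / M' else 0) = 0
    rw [if_neg hm0]
  rw [hreal, Pi.add_apply]
  show (Φ.A m).mulVec (Φ.hidden m x) idx + Φ.b m idx = _
  rw [hb, add_zero]
  rcases Nat.even_or_odd m with hme | hmo
  · -- m even, L odd: broadcast layer (pick entry 0)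
    have hm2 : m % 2 = 0 := Nat.even_iff.mp hme
    have hm2' : ¬ m % 2 = 1 := by omega
    have hA : ∀ j : Fin (Φ.N m), Φ.A m idx j = if (j : ℕ) = 0 then a else 0 := by
      intro j
      show (if m = 0 then -a else if m % 2 = 1 then (if (idx : ℕ) = 0 then a else 0)
        else (if ((j : Fin (Φ.N m)) : ℕ) = 0 then a else 0)) = _
      rw [if_neg hm0, if_neg hm2']
    have hsum : (Φ.A m).mulVec (Φ.hidden m x) idx
        = a * (a ^ m * (n : ℝ) ^ (m / 2) * zval d M' x) := by
      simp only [Matrix.mulVec, dotProduct, hA]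
      have hfun : ∀ j : Fin (Φ.N m),
          (if (j : ℕ) = 0 then a else 0) * Φ.hidden m x j
          = if j = (⟨0, by omega⟩ : Fin (Φ.N m)) then
              a * (a ^ m * (n : ℝ) ^ (m / 2) * zval d M' x) else 0 := by
        intro j
        rw [hih j]
        by_cases hj : (j : ℕ) = 0
        · have : j = (⟨0, by omega⟩ : Fin (Φ.N m)) := by
            apply Fin.ext; simpa using hj
          simp [hj, this, hm2']
        · have : ¬ j = (⟨0, by omega⟩ : Fin (Φ.N m)) := by
            intro hjj; apply hj; rw [hjj]
          simp [hj, this]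
      rw [Finset.sum_congr rfl (fun j _ => hfun j), Finset.sum_ite_eq']
      simp
    rw [hsum]
    have hLd : L / 2 = m / 2 := by omega
    have hLm : L = m + 1 := by omega
    rw [hLd, hLm, pow_succ]
    ring
  · -- m odd, L even: collapse layer (sum)
    have hm2 : m % 2 = 1 := Nat.odd_iff.mp hmo
    have hA : ∀ j : Fin (Φ.N m), Φ.A m idx j = a := by
      intro j
      show (if m = 0 then -a else if m % 2 = 1 then (if (idx : ℕ) = 0 then a else 0)
        else (if ((j : Fin (Φ.N m)) : ℕ) = 0 then a else 0)) = _
      rw [if_neg hm0, if_pos hm2, if_pos hidxv]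
    have hsum : (Φ.A m).mulVec (Φ.hidden m x) idx
        = a * ((n : ℝ) * (a ^ m * (n : ℝ) ^ (m / 2) * zval d M' x)) := by
      simp only [Matrix.mulVec, dotProduct, hA]
      have hfun : ∀ j : Fin (Φ.N m),
          a * Φ.hidden m x j = a * (a ^ m * (n : ℝ) ^ (m / 2) * zval d M' x) := by
        intro j; rw [hih j, if_pos hm2]
      rw [Finset.sum_congr rfl (fun j _ => hfun j), Finset.sum_const,
        Finset.card_univ, Fintype.card_fin, hNm, nsmul_eq_mul]
      ring
    rw [hsum]
    have hLd : L / 2 = m / 2 + 1 := by omega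
    have hLm : L = m + 1 := by omega
    rw [hLd, hLm, pow_succ, pow_succ]
    ring

lemma zetaNet_weightCount (d n L : ℕ) (hn : 0 < n) (hL : 2 ≤ L) (a M' : ℝ) :
    (zetaNet d n L (by omega) a M').weightCount ≤ (d + L) * n := by
  set Φ := zetaNet d n L (by omega : 0 < L) a M' with hΦ
  have hN0 : Φ.N 0 = d := Φ.hN0
  have hN1 : Φ.N 1 = n := by
    show (if 1 = 0 then d else if 1 < L then n else 1) = n
    rw [if_neg (by omega), if_pos (by omega)]
  -- bound for layer 0
  have h0 : (Finset.univ.filter fun ij : Fin (Φ.N 1) × Fin (Φ.N 0) =>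
        Φ.A 0 ij.1 ij.2 ≠ 0).card
      + (Finset.univ.filter fun i : Fin (Φ.N 1) => Φ.b 0 i ≠ 0).card
      ≤ n * d + n := by
    gcongr
    · calc (Finset.univ.filter fun ij : Fin (Φ.N 1) × Fin (Φ.N 0) =>
            Φ.A 0 ij.1 ij.2 ≠ 0).card
          ≤ (Finset.univ : Finset (Fin (Φ.N 1) × Fin (Φ.N 0))).card :=
            Finset.card_filter_le _ _
        _ = n * d := by simp [hN0, hN1]
    · calc (Finset.univ.filter fun i : Fin (Φ.N 1) => Φ.b 0 i ≠ 0).card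
          ≤ (Finset.univ : Finset (Fin (Φ.N 1))).card := Finset.card_filter_le _ _
        _ = n := by simp [hN1]
  -- bound for layers ℓ ≥ 1
  have h1 : ∀ ℓ, 1 ≤ ℓ → ℓ < L →
      (Finset.univ.filter fun ij : Fin (Φ.N (ℓ + 1)) × Fin (Φ.N ℓ) =>
        Φ.A ℓ ij.1 ij.2 ≠ 0).card
      + (Finset.univ.filter fun i : Fin (Φ.N (ℓ + 1)) => Φ.b ℓ i ≠ 0).card
      ≤ n := by
    intro ℓ hℓ1 hℓL
    have hℓ0 : ¬ ℓ = 0 := by omega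
    have hbz : (Finset.univ.filter fun i : Fin (Φ.N (ℓ + 1)) => Φ.b ℓ i ≠ 0).card = 0 := by
      rw [Finset.card_eq_zero]
      apply Finset.filter_false_of_mem
      intro i _
      simp only [ne_eq, not_not]
      show (if ℓ = 0 then a / M' else 0) = 0
      rw [if_neg hℓ0]
    rw [hbz, add_zero]
    have hNℓ : Φ.N ℓ = n := by
      show (if ℓ = 0 then d else if ℓ < L then n else 1) = n
      rw [if_neg hℓ0, if_pos hℓL]
    have hNℓ1 : Φ.N (ℓ + 1) ≤ n := by
      show (if ℓ + 1 = 0 then d else if ℓ + 1 < L then n else 1) ≤ n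
      rw [if_neg (by omega)]
      split_ifs <;> omega
    rcases Nat.even_or_odd ℓ with hℓe | hℓo
    · -- broadcast layer: nonzero entries only in column 0
      have hℓ2 : ¬ ℓ % 2 = 1 := by
        have := Nat.even_iff.mp hℓe
        omega
      have hsub : ∀ ij : Fin (Φ.N (ℓ + 1)) × Fin (Φ.N ℓ),
          Φ.A ℓ ij.1 ij.2 ≠ 0 → (ij.2 : ℕ) = 0 := by
        intro ij hij
        by_contra hij2
        apply hij
        show (if ℓ = 0 then -a else if ℓ % 2 = 1 then (if ((ij.1 : Fin (Φ.N (ℓ+1))) : ℕ) = 0 then a else 0)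
          else (if ((ij.2 : Fin (Φ.N ℓ)) : ℕ) = 0 then a else 0)) = 0
        rw [if_neg hℓ0, if_neg hℓ2, if_neg hij2]
      calc (Finset.univ.filter fun ij : Fin (Φ.N (ℓ + 1)) × Fin (Φ.N ℓ) =>
              Φ.A ℓ ij.1 ij.2 ≠ 0).card
          ≤ (Finset.univ : Finset (Fin (Φ.N (ℓ + 1)))).card := by
            apply Finset.card_le_card_of_injOn (fun ij => ij.1)
            · intro ij _; exact Finset.mem_univ _
            · intro ij hij ij' hij' hfst
              simp only [Finset.mem_coe, Finset.mem_filter] at hij hij'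
              have h2 : (ij.2 : ℕ) = 0 := hsub ij hij.2
              have h2' : (ij'.2 : ℕ) = 0 := hsub ij' hij'.2
              have : ij.2 = ij'.2 := by apply Fin.ext; rw [h2, h2']
              exact Prod.ext hfst this
        _ ≤ n := by simpa using hNℓ1
    · -- collapse layer: nonzero entries only in row 0
      have hℓ2 : ℓ % 2 = 1 := Nat.odd_iff.mp hℓo
      have hsub : ∀ ij : Fin (Φ.N (ℓ + 1)) × Fin (Φ.N ℓ),
          Φ.A ℓ ij.1 ij.2 ≠ 0 → (ij.1 : ℕ) = 0 := by
        intro ij hij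
        by_contra hij2
        apply hij
        show (if ℓ = 0 then -a else if ℓ % 2 = 1 then (if ((ij.1 : Fin (Φ.N (ℓ+1))) : ℕ) = 0 then a else 0)
          else (if ((ij.2 : Fin (Φ.N ℓ)) : ℕ) = 0 then a else 0)) = 0
        rw [if_neg hℓ0, if_pos hℓ2, if_neg hij2]
      calc (Finset.univ.filter fun ij : Fin (Φ.N (ℓ + 1)) × Fin (Φ.N ℓ) =>
              Φ.A ℓ ij.1 ij.2 ≠ 0).card
          ≤ (Finset.univ : Finset (Fin (Φ.N ℓ))).card := by
            apply Finset.card_le_card_of_injOn (fun ij => ij.2)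
            · intro ij _; exact Finset.mem_univ _
            · intro ij hij ij' hij' hsnd
              simp only [Finset.mem_coe, Finset.mem_filter] at hij hij'
              have h2 : (ij.1 : ℕ) = 0 := hsub ij hij.2
              have h2' : (ij'.1 : ℕ) = 0 := hsub ij' hij'.2
              have : ij.1 = ij'.1 := by apply Fin.ext; rw [h2, h2']
              exact Prod.ext this hsnd
        _ = n := by simp [hNℓ]
  -- assemble
  obtain ⟨K, rfl⟩ : ∃ K, L = K + 2 := ⟨L - 2, by omega⟩
  unfold NeuralNet.weightCount
  have hΦL : Φ.L = K + 2 := rfl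
  rw [hΦL, Finset.sum_range_succ']
  have hsum1 : ∑ i ∈ Finset.range (K + 1),
      ((Finset.univ.filter fun ij : Fin (Φ.N (i + 1 + 1)) × Fin (Φ.N (i + 1)) =>
        Φ.A (i + 1) ij.1 ij.2 ≠ 0).card
      + (Finset.univ.filter fun j : Fin (Φ.N (i + 1 + 1)) => Φ.b (i + 1) j ≠ 0).card)
      ≤ (K + 1) * n := by
    calc _ ≤ ∑ _i ∈ Finset.range (K + 1), n :=
          Finset.sum_le_sum (fun i hi => h1 (i + 1) (by omega)
            (by simp only [Finset.mem_range] at hi; omega))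
      _ = (K + 1) * n := by simp [Finset.sum_const, mul_comm]
  calc _ ≤ (K + 1) * n + (n * d + n) := Nat.add_le_add hsum1 h0
    _ = (d + (K + 2)) * n := by ring

lemma zetaNet_bounded (d n L : ℕ) (hL : 2 ≤ L) (a M' : ℝ) (ha : 0 ≤ a) (hM' : 1 ≤ M')
    (c' : ℝ≥0∞) (hc : ENNReal.ofReal a ≤ c') :
    (zetaNet d n L (by omega) a M').weightsBoundedBy c' := by
  intro ℓ _
  constructor
  · intro i j
    refine le_trans ?_ hc
    apply ENNReal.ofReal_le_ofReal
    show |if ℓ = 0 then -a else if ℓ % 2 = 1 then (if (i : ℕ) = 0 then a else 0)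
      else (if (j : ℕ) = 0 then a else 0)| ≤ a
    split_ifs <;> simp [abs_of_nonneg ha, ha]
  · intro i
    refine le_trans ?_ hc
    apply ENNReal.ofReal_le_ofReal
    show |if ℓ = 0 then a / M' else 0| ≤ a
    split_ifs
    · rw [abs_of_nonneg (by positivity)]
      exact div_le_self ha hM'
    · simpa using ha

end AuxZeta
/-- Step 1 in the proof of Theorem 3.6: if `0 ≤ C ≤ c(n)`,
`2 ≤ L ≤ ℓ(n)`, `M' ≥ 1` and `0 ≤ M ≤ C^L·n^{⌊L/2⌋}`, then
`(M/M')·ζ_{M'} ∈ Σ_{(d+L)·n}`. -/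
theorem scaled_zeta_mem_NNSet
    (d : ℕ) (hd : 0 < d) (ℓf cf : ℕ → ℕ∞)
    (hℓmono : Monotone ℓf) (hcmono : Monotone cf)
    (hℓ2 : ∀ k, 2 ≤ ℓf k) (hc1 : ∀ k, 1 ≤ cf k)
    (n : ℕ) (hn : 1 ≤ n)
    (C : ℝ) (hC0 : 0 ≤ C) (hCle : ENNReal.ofReal C ≤ (cf n : ℝ≥0∞))
    (L : ℕ) (hL2 : 2 ≤ L) (hLle : (L : ℕ∞) ≤ ℓf n)
    (M' : ℝ) (hM' : 1 ≤ M')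
    (M : ℝ) (hM0 : 0 ≤ M) (hM : M ≤ C ^ L * (n : ℝ) ^ (L / 2)) :
    (fun x => M / M' * zeta d M' x) ∈
      NNSet d ℓf (fun k => (cf k : ℝ≥0∞)) ((d + L) * n) := by
  have hn0 : 0 < n := hn
  have hL0 : 0 < L := by omega
  have hnR : (0 : ℝ) < (n : ℝ) ^ (L / 2) := by positivity
  set a : ℝ := (M / (n : ℝ) ^ (L / 2)) ^ ((L : ℝ)⁻¹) with ha_def
  have hq0 : 0 ≤ M / (n : ℝ) ^ (L / 2) := by positivity
  have ha0 : 0 ≤ a := Real.rpow_nonneg hq0 _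
  have haL : a ^ L = M / (n : ℝ) ^ (L / 2) :=
    Real.rpow_inv_natCast_pow hq0 (by omega)
  have haC : a ≤ C := by
    have h1 : M / (n : ℝ) ^ (L / 2) ≤ C ^ L := by
      rw [div_le_iff₀ hnR]; exact hM
    calc a ≤ (C ^ L) ^ ((L : ℝ)⁻¹) := by
          apply Real.rpow_le_rpow hq0 h1 (by positivity)
      _ = C := Real.pow_rpow_inv_natCast hC0 (by omega)
  have hnle : n ≤ (d + L) * n := Nat.le_mul_of_pos_left n (by omega)
  refine ⟨zetaNet d n L hL0 a M', ?_, ?_, ?_, ?_⟩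
  · funext x
    have hreal := zetaNet_realization d n L hn0 hL2 a M' ha0 x
    rw [hreal, haL, div_mul_eq_mul_div, div_mul_eq_mul_div, mul_div_assoc,
      mul_div_assoc]
    rw [div_self (ne_of_gt hnR), mul_one]
    have hM'0 : 0 < M' := by linarith
    have hzz : zval d M' x = zeta d M' x / M' := by
      unfold zval zeta
      rw [← max_div_div_right (le_of_lt hM'0) 0 (1 - M' * ∑ i, x i)]
      congr 1
      · simp
      · field_simp
    rw [hzz]
    all_goals ring
  · exact zetaNet_weightCount d n L hn0 hL2 a M'
  · calc ((zetaNet d n L hL0 a M').L : ℕ∞) = (L : ℕ∞) := rfl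
      _ ≤ ℓf n := hLle
      _ ≤ ℓf ((d + L) * n) := hℓmono hnle
  · apply zetaNet_bounded d n L hL2 a M' ha0 hM'
    calc ENNReal.ofReal a ≤ ENNReal.ofReal C := ENNReal.ofReal_le_ofReal haC
      _ ≤ (cf n : ℝ≥0∞) := hCle
      _ ≤ (cf ((d + L) * n) : ℝ≥0∞) := ENat.toENNReal_le.mpr (hcmono hnle)
end
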